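/- Let (V,‖·‖) be a Banach space and Ψ : V → ℝ a C¹ functional such that (a) Ψ(0) = 0, (b) there exist ρ, R > 0 with Ψ(u) ≥ ρ for all u ∈ V with ‖u‖ = R, and (c) there exists v₀ ∈ V with limsup_{t→∞} Ψ(t v₀) < 0. Let t₀ > 0 be such that ‖t₀v₀‖ > R and Ψ(t₀v₀) < 0, and set c_{v₀}(Ψ) = inf_{σ∈Γ} sup_{t∈[0,1]} Ψ(σ(t)) where Γ = {σ ∈ C([0,1],V) : σ(0) = 0, σ(1) = t₀v₀}. Then c_{v₀}(Ψ) ≥ ρ > 0 and there exists a sequence (w_k) in V with Ψ(w_k) → c_{v₀}(Ψ) and Ψ′(w_k) → 0 strongly in the dual V′. -/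

import Mathlib

open Filter Topology Set Metric

lemma weak_ekeland {X : Type*} [MetricSpace X] [CompleteSpace X]
    (F : X → ℝ) (m : ℝ) (hm : ∀ x, m ≤ F x)
    (hlsc : ∀ (z : X) (u : ℕ → X) (ℓ : ℝ), Tendsto u atTop (𝓝 z) →
      Tendsto (fun n => F (u n)) atTop (𝓝 ℓ) → F z ≤ ℓ)
    (α : ℝ) (hα : 0 < α) (x₀ : X) :
    ∃ x : X, F x ≤ F x₀ ∧ ∀ y : X, F x - α * dist x y ≤ F y := by
  classical
  set S : X → Set X := fun z => {y | F y ≤ F z - α * dist z y} with hS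
  have hself : ∀ z, z ∈ S z := by intro z; simp [hS]
  have hne : ∀ z, ((F '' S z)).Nonempty := fun z => ⟨F z, z, hself z, rfl⟩
  have hbdd : ∀ z, BddBelow (F '' S z) := fun z => ⟨m, by rintro _ ⟨y, -, rfl⟩; exact hm y⟩
  -- choice of next point
  have hstep : ∀ (n : ℕ) (z : X), ∃ y : X, y ∈ S z ∧ F y < sInf (F '' S z) + (1/2)^n := by
    intro n z
    obtain ⟨a, ⟨y, hy, rfl⟩, ha⟩ := Real.lt_sInf_add_pos (hne z)
      (by positivity : (0:ℝ) < (1/2)^n)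
    exact ⟨y, hy, ha⟩
  choose step hstep1 hstep2 using hstep
  let x : ℕ → X := fun n => Nat.rec x₀ (fun k z => step k z) n
  have hxsucc : ∀ n, x (n+1) = step n (x n) := fun n => rfl
  have hmem : ∀ n, x (n+1) ∈ S (x n) := fun n => hstep1 n (x n)
  have hdist : ∀ n, α * dist (x n) (x (n+1)) ≤ F (x n) - F (x (n+1)) := by
    intro n; have := hmem n; simp only [hS, mem_setOf_eq] at this; linarith
  have hanti : ∀ n k, n ≤ k → F (x k) ≤ F (x n) := by
    intro n k hnk
    induction k with
    | zero => simp_all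
    | succ k ih =>
      rcases Nat.lt_or_ge n (k+1) with h | h
      · have h1 := ih (Nat.lt_succ_iff.mp h)
        have h2 := hdist k
        have := dist_nonneg (x := x k) (y := x (k+1))
        nlinarith
      · have : n = k + 1 := le_antisymm hnk h
        simp [this]
  -- distance chain bound
  have hchain : ∀ n k, n ≤ k → dist (x n) (x k) ≤ (F (x n) - F (x k)) / α := by
    intro n k hnk
    induction k with
    | zero => interval_cases n; simp
    | succ k ih =>
      rcases Nat.lt_or_ge n (k+1) with h | h
      · have h1 := ih (Nat.lt_succ_iff.mp h)
        have h2 := hdist k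
        have h3 := dist_triangle (x n) (x k) (x (k+1))
        rw [le_div_iff₀ hα] at h1 ⊢
        nlinarith [dist_nonneg (x := x n) (y := x k)]
      · have : n = k + 1 := le_antisymm hnk h
        simp [this]
  -- F (x n) converges
  have hbddrange : BddBelow (range fun n => F (x n)) := ⟨m, by rintro _ ⟨n, rfl⟩; exact hm _⟩
  have hantitone : Antitone fun n => F (x n) := antitone_nat_of_succ_le fun n => by
    have h2 := hdist n; have := dist_nonneg (x := x n) (y := x (n+1)); nlinarith
  set ℓ := ⨅ n, F (x n) with hℓ
  have hFlim : Tendsto (fun n => F (x n)) atTop (𝓝 ℓ) := tendsto_atTop_ciInf hantitone hbddrange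
  have hℓle : ∀ n, ℓ ≤ F (x n) := fun n => ciInf_le hbddrange n
  -- Cauchy
  have hcauchy : CauchySeq x := by
    apply cauchySeq_of_le_tendsto_0 (fun n => (F (x n) - ℓ) / α)
    · intro n k N hn hk
      have key : ∀ a b : ℕ, N ≤ a → a ≤ b → dist (x a) (x b) ≤ (F (x N) - ℓ) / α := by
        intro a b ha hab
        have h1 := hchain a b hab
        have h2 : F (x a) ≤ F (x N) := hanti N a ha
        have h3 := hℓle b
        have : F (x a) - F (x b) ≤ F (x N) - ℓ := by linarith
        exact h1.trans (by gcongr)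
      rcases le_total n k with h | h
      · exact key n k hn h
      · rw [dist_comm]; exact key k n hk h
    · have : Tendsto (fun n => (F (x n) - ℓ) / α) atTop (𝓝 ((ℓ - ℓ)/α)) :=
        ((hFlim.sub tendsto_const_nhds).div_const α)
      simpa using this
  obtain ⟨xb, hxb⟩ := cauchySeq_tendsto_of_complete hcauchy
  have hFxb : F xb ≤ ℓ := hlsc xb x ℓ hxb hFlim
  refine ⟨xb, hFxb.trans ((hℓle 0).trans le_rfl), ?_⟩
  intro y
  by_contra hcon
  push_neg at hcon
  set γ := F xb - α * dist xb y - F y with hγ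
  have hγpos : 0 < γ := by simp only [hγ]; linarith
  -- eventually y ∈ S (x n)
  have hdconv : Tendsto (fun n => dist (x n) y) atTop (𝓝 (dist xb y)) :=
    (hxb.dist tendsto_const_nhds)
  have hev : ∀ᶠ n in atTop, α * dist (x n) y < α * dist xb y + γ := by
    have : Tendsto (fun n => α * dist (x n) y) atTop (𝓝 (α * dist xb y)) :=
      hdconv.const_mul α
    exact this.eventually_lt_const (by linarith)
  have hmemS : ∀ᶠ n in atTop, y ∈ S (x n) := by
    filter_upwards [hev] with n hn
    have h1 : F xb ≤ F (x n) := hFxb.trans (hℓle n)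
    simp only [hS, mem_setOf_eq]
    have : F y = F xb - α * dist xb y - γ := by simp only [hγ]; ring
    linarith
  have hlb : ∀ᶠ n in atTop, ℓ - (1/2)^n ≤ F y := by
    filter_upwards [hmemS] with n hn
    have h1 : sInf (F '' S (x n)) ≤ F y := csInf_le (hbdd _) ⟨y, hn, rfl⟩
    have h2 := hstep2 n (x n)
    have h3 : ℓ ≤ F (x (n+1)) := hℓle (n+1)
    have : F (x (n+1)) = F (step n (x n)) := by rw [hxsucc]
    linarith [this ▸ h3]
  have hfin : ℓ ≤ F y := by
    have hlim : Tendsto (fun n : ℕ => ℓ - (1/2:ℝ)^n) atTop (𝓝 (ℓ - 0)) :=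
      tendsto_const_nhds.sub (tendsto_pow_atTop_nhds_zero_of_lt_one (by norm_num) (by norm_num))
    have := le_of_tendsto hlim hlb
    simpa using this
  have : F y < F xb := by simp only [hγ] at hγpos; nlinarith [dist_nonneg (x := xb) (y := y), hα.le]
  linarith [hFxb]
lemma exists_unit_apply_gt {V : Type*} [NormedAddCommGroup V] [NormedSpace ℝ V]
    (L : V →L[ℝ] ℝ) (ε : ℝ) (hε : 0 ≤ ε) (h : ε < ‖L‖) : ∃ v : V, ‖v‖ ≤ 1 ∧ ε < L v := by
  by_contra hc
  push_neg at hc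
  have : ‖L‖ ≤ ε := by
    refine L.opNorm_le_bound hε fun x => ?_
    rcases eq_or_ne x 0 with rfl | hx
    · simp
    · have hnx : 0 < ‖x‖ := norm_pos_iff.mpr hx
      have hu : ‖‖x‖⁻¹ • x‖ ≤ 1 := by
        rw [norm_smul, norm_inv, norm_norm, inv_mul_cancel₀ hnx.ne']
      have hu' : ‖-(‖x‖⁻¹ • x)‖ ≤ 1 := by rwa [norm_neg]
      have h1 := hc _ hu
      have h2 := hc _ hu'
      rw [map_neg] at h2
      have habs : |L (‖x‖⁻¹ • x)| ≤ ε := abs_le.mpr ⟨by linarith, h1⟩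
      have : L (‖x‖⁻¹ • x) = ‖x‖⁻¹ * L x := by
        rw [map_smul]; simp
      rw [this, abs_mul, abs_inv, abs_norm] at habs
      rw [Real.norm_eq_abs]
      calc |L x| = ‖x‖ * (‖x‖⁻¹ * |L x|) := by field_simp
        _ ≤ ‖x‖ * ε := by
            apply mul_le_mul_of_nonneg_left _ hnx.le
            exact habs
        _ = ε * ‖x‖ := mul_comm _ _
  linarith

set_option maxHeartbeats 1000000 in
/-- Mountain Pass Lemma of Ambrosetti–Rabinowitz: a `C¹` functional `Ψ` on a
Banach space with `Ψ(0) = 0`, a ring of mountains of height `ρ` at radius `R`,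
and a point `t₀v₀` beyond the ring where `Ψ` is negative, admits a Palais–Smale
sequence at the mountain pass level `c_{v₀}(Ψ) ≥ ρ > 0`. -/
theorem mountain_pass_palais_smale_sequence
    (V : Type*) [NormedAddCommGroup V] [NormedSpace ℝ V] [CompleteSpace V]
    (Ψ : V → ℝ) (hΨC1 : ContDiff ℝ 1 Ψ) (hΨ0 : Ψ 0 = 0)
    (ρ R : ℝ) (hρ : 0 < ρ) (hR : 0 < R)
    (hmin : ∀ u : V, ‖u‖ = R → ρ ≤ Ψ u)
    (v₀ : V) (hv₀ : limsup (fun t : ℝ => Ψ (t • v₀)) atTop < 0)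
    (t₀ : ℝ) (ht₀ : 0 < t₀) (ht₀R : R < ‖t₀ • v₀‖) (ht₀neg : Ψ (t₀ • v₀) < 0) :
    ρ ≤ sInf { y : ℝ | ∃ σ : ℝ → V, ContinuousOn σ (Icc 0 1) ∧ σ 0 = 0 ∧
        σ 1 = t₀ • v₀ ∧ y = sSup ((fun t => Ψ (σ t)) '' Icc 0 1) } ∧
    ∃ w : ℕ → V,
      Tendsto (fun k => Ψ (w k)) atTop
        (𝓝 (sInf { y : ℝ | ∃ σ : ℝ → V, ContinuousOn σ (Icc 0 1) ∧ σ 0 = 0 ∧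
          σ 1 = t₀ • v₀ ∧ y = sSup ((fun t => Ψ (σ t)) '' Icc 0 1) })) ∧
      Tendsto (fun k => ‖fderiv ℝ Ψ (w k)‖) atTop (𝓝 0) := by
  classical
  have hΨc : Continuous Ψ := hΨC1.continuous
  have hΨ'c : Continuous (fderiv ℝ Ψ) := hΨC1.continuous_fderiv one_ne_zero
  set e : V := t₀ • v₀ with he
  set S := { y : ℝ | ∃ σ : ℝ → V, ContinuousOn σ (Icc 0 1) ∧ σ 0 = 0 ∧
      σ 1 = e ∧ y = sSup ((fun t => Ψ (σ t)) '' Icc 0 1) } with hSdef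
  -- basic facts about admissible raw paths
  have key : ∀ σ : ℝ → V, ContinuousOn σ (Icc 0 1) → σ 0 = 0 → σ 1 = e →
      BddAbove ((fun t => Ψ (σ t)) '' Icc 0 1) ∧ ρ ≤ sSup ((fun t => Ψ (σ t)) '' Icc 0 1) := by
    intro σ hσc hσ0 hσ1
    have himg : IsCompact ((fun t => Ψ (σ t)) '' Icc 0 1) :=
      isCompact_Icc.image_of_continuousOn (hΨc.comp_continuousOn hσc)
    have hbdd : BddAbove ((fun t => Ψ (σ t)) '' Icc 0 1) := himg.bddAbove
    refine ⟨hbdd, ?_⟩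
    -- IVT: some point of the path has norm R
    have hn : ContinuousOn (fun t => ‖σ t‖) (Icc 0 1) := hσc.norm
    have hmem : R ∈ Icc ‖σ 0‖ ‖σ 1‖ := by
      rw [hσ0, hσ1]; simp only [norm_zero]
      exact ⟨hR.le, ht₀R.le⟩
    obtain ⟨t, ht, htR⟩ := intermediate_value_Icc zero_le_one hn hmem
    have : ρ ≤ Ψ (σ t) := hmin _ htR
    exact this.trans (le_csSup hbdd ⟨t, ht, rfl⟩)
  have hSne : S.Nonempty := by
    refine ⟨sSup ((fun t => Ψ ((t : ℝ) • e)) '' Icc 0 1), fun t => t • e, ?_, ?_, ?_, rfl⟩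
    · exact (continuous_id.smul continuous_const).continuousOn
    · simp
    · simp
  have hSlb : ∀ y ∈ S, ρ ≤ y := by
    rintro y ⟨σ, h1, h2, h3, rfl⟩
    exact (key σ h1 h2 h3).2
  set c := sInf S with hcdef
  have hρc : ρ ≤ c := le_csInf hSne hSlb
  have hcy : ∀ y ∈ S, c ≤ y := fun y hy => csInf_le ⟨ρ, hSlb⟩ hy
  refine ⟨hρc, ?_⟩
  -- the main approximate critical point claim
  have main : ∀ ε : ℝ, 0 < ε → ε ≤ ρ/2 → ∃ u : V, |Ψ u - c| ≤ ε ∧ ‖fderiv ℝ Ψ u‖ ≤ ε := by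
    intro ε hε hερ
    by_contra hcon
    push_neg at hcon
    have hgrad : ∀ u : V, c - ε ≤ Ψ u → Ψ u ≤ c + ε → ε < ‖fderiv ℝ Ψ u‖ := by
      intro u h1 h2
      exact hcon u (abs_le.mpr ⟨by linarith, by linarith⟩)
    -- the path space
    set z₀ : Icc (0:ℝ) 1 := ⟨0, by norm_num⟩ with hz₀
    set z₁ : Icc (0:ℝ) 1 := ⟨1, by norm_num⟩ with hz₁
    set Xs : Set C(Icc (0:ℝ) 1, V) := {g | g z₀ = 0 ∧ g z₁ = e} with hXs
    have hXclosed : IsClosed Xs := by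
      apply IsClosed.inter
      · exact isClosed_eq (continuous_eval_const z₀) continuous_const
      · exact isClosed_eq (continuous_eval_const z₁) continuous_const
    haveI : CompleteSpace Xs := hXclosed.completeSpace_coe
    set F : Xs → ℝ := fun g => sSup (range fun t : Icc (0:ℝ) 1 => Ψ (g.1 t)) with hF
    -- compactness of ranges
    have hrangecpt : ∀ g : Xs, IsCompact (range fun t : Icc (0:ℝ) 1 => Ψ (g.1 t)) := by
      intro g
      exact isCompact_range (hΨc.comp g.1.continuous)
    have hrangebdd : ∀ g : Xs, BddAbove (range fun t : Icc (0:ℝ) 1 => Ψ (g.1 t)) :=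
      fun g => (hrangecpt g).bddAbove
    have hFge : ∀ (g : Xs) (t : Icc (0:ℝ) 1), Ψ (g.1 t) ≤ F g :=
      fun g t => le_csSup (hrangebdd g) ⟨t, rfl⟩
    have hFattain : ∀ g : Xs, ∃ t : Icc (0:ℝ) 1, F g = Ψ (g.1 t) := by
      intro g
      obtain ⟨t, -, ht⟩ := isCompact_univ.exists_isMaxOn univ_nonempty
        (hΨc.comp g.1.continuous).continuousOn
      refine ⟨t, le_antisymm ?_ (hFge g t)⟩
      refine csSup_le ⟨Ψ (g.1 z₀), z₀, rfl⟩ ?_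
      rintro y ⟨s, rfl⟩
      exact ht (mem_univ s)
    -- F on Xs relates to S
    have hXtoS : ∀ g : Xs, F g ∈ S := by
      intro g
      refine ⟨fun t => g.1 (projIcc 0 1 zero_le_one t), ?_, ?_, ?_, ?_⟩
      · exact (g.1.continuous.comp continuous_projIcc).continuousOn
      · simpa [projIcc, hz₀] using g.2.1
      · simpa [projIcc, hz₁] using g.2.2
      · have hseteq : (range fun t : Icc (0:ℝ) 1 => Ψ (g.1 t)) =
            ((fun t => Ψ (g.1 (projIcc 0 1 zero_le_one t))) '' Icc 0 1) := by
          ext y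
          constructor
          · rintro ⟨t, rfl⟩
            exact ⟨t.1, t.2, by simp [projIcc_of_mem zero_le_one t.2]⟩
          · rintro ⟨t, ht, rfl⟩
            exact ⟨projIcc 0 1 zero_le_one t, rfl⟩
        simp only [hF, hseteq]
    have hcF : ∀ g : Xs, c ≤ F g := fun g => hcy _ (hXtoS g)
    -- a starting path with F close to c
    have hx₀ : ∃ g : Xs, F g < c + ε := by
      obtain ⟨y, hy, hylt⟩ := Real.lt_sInf_add_pos hSne hε
      obtain ⟨σ, hσc, hσ0, hσ1, rfl⟩ := hy
      refine ⟨⟨⟨fun t => σ t, hσc.restrict⟩, ?_, ?_⟩, ?_⟩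
      · exact hσ0
      · exact hσ1
      · refine lt_of_le_of_lt (le_of_eq ?_) hylt
        simp only [hF]
        congr 1
        ext y
        constructor
        · rintro ⟨t, rfl⟩
          exact ⟨t.1, t.2, rfl⟩
        · rintro ⟨t, ht, rfl⟩
          exact ⟨⟨t, ht⟩, rfl⟩
    obtain ⟨g₀, hg₀⟩ := hx₀
    -- lower semicontinuity hypothesis for Ekeland
    have hlsc : ∀ (z : Xs) (u : ℕ → Xs) (ℓ : ℝ), Tendsto u atTop (𝓝 z) →
        Tendsto (fun n => F (u n)) atTop (𝓝 ℓ) → F z ≤ ℓ := by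
      intro z u ℓ hu hFu
      obtain ⟨t, ht⟩ := hFattain z
      rw [ht]
      have hpt : Tendsto (fun n => Ψ ((u n).1 t)) atTop (𝓝 (Ψ (z.1 t))) := by
        have h1 : Tendsto (fun n => (u n).1 t) atTop (𝓝 (z.1 t)) :=
          (((ContinuousEvalConst.continuous_eval_const t).comp
            continuous_subtype_val).tendsto z).comp hu
        exact (hΨc.tendsto _).comp h1
      have hle : ∀ n, Ψ ((u n).1 t) ≤ F (u n) := fun n => hFge (u n) t
      exact le_of_tendsto_of_tendsto hpt hFu (Eventually.of_forall hle)
    -- Ekeland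
    obtain ⟨g, hgle, hgek⟩ := weak_ekeland F ρ (fun g => hρc.trans (hcF g)) hlsc (ε/8)
      (by positivity) g₀
    have hgc : c ≤ F g := hcF g
    have hgce : F g ≤ c + ε := hgle.trans hg₀.le
    -- deformation argument gives contradiction
    set σ : C(Icc (0:ℝ) 1, V) := g.1 with hσ
    set L : Icc (0:ℝ) 1 → (V →L[ℝ] ℝ) := fun t => fderiv ℝ Ψ (σ t) with hL
    have hLcont : Continuous L := hΨ'c.comp σ.continuous
    set B : Set (Icc (0:ℝ) 1) := {t | c - 3*ε/4 ≤ Ψ (σ t)} with hB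
    have hBclosed : IsClosed B := isClosed_le continuous_const (hΨc.comp σ.continuous)
    have hBcpt : IsCompact B := hBclosed.isCompact
    have hBne : B.Nonempty := by
      obtain ⟨t, ht⟩ := hFattain g
      exact ⟨t, by simp only [hB, mem_setOf_eq, ← hσ, ← ht]; linarith⟩
    -- good directions
    have hdir : ∀ t : Icc (0:ℝ) 1, t ∈ B → ∃ v : V, ‖v‖ ≤ 1 ∧ ε < L t v := by
      intro t ht
      refine exists_unit_apply_gt _ _ hε.le (hgrad (σ t) ?_ ?_)
      · simp only [hB, mem_setOf_eq] at ht; linarith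
      · exact (hFge g t).trans hgce
    choose dir hdir1 hdir2 using hdir
    -- finite subcover
    set U : B → Set (Icc (0:ℝ) 1) := fun i => {t | ε/2 < L t (dir i.1 i.2)} with hU
    have hUopen : ∀ i, IsOpen (U i) := by
      intro i
      apply isOpen_lt continuous_const
      exact (ContinuousLinearMap.apply ℝ ℝ (dir i.1 i.2)).continuous.comp hLcont
    have hUcover : B ⊆ ⋃ i, U i := by
      intro t ht
      exact mem_iUnion.mpr ⟨⟨t, ht⟩, lt_trans (by linarith) (hdir2 t ht)⟩
    obtain ⟨fs, hfs⟩ := hBcpt.elim_finite_subcover U hUopen hUcover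
    -- partition-of-unity style weights
    set gf : B → Icc (0:ℝ) 1 → ℝ := fun i t => max 0 (L t (dir i.1 i.2) - ε/2) with hgf
    have hgfcont : ∀ i, Continuous (gf i) := by
      intro i
      exact continuous_const.max (((ContinuousLinearMap.apply ℝ ℝ
        (dir i.1 i.2)).continuous.comp hLcont).sub continuous_const)
    have hgfnonneg : ∀ i t, 0 ≤ gf i t := fun i t => le_max_left _ _
    have hgfpos : ∀ i t, t ∈ U i → 0 < gf i t := by
      intro i t ht
      simp only [hU, mem_setOf_eq] at ht
      simp only [hgf, lt_max_iff]
      right; linarith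
    set Df : Icc (0:ℝ) 1 → ℝ := fun t => (∑ i ∈ fs, gf i t) + infDist t B with hDf
    have hDfcont : Continuous Df :=
      (continuous_finset_sum fs fun i _ => hgfcont i).add (continuous_infDist_pt B)
    have hDfpos : ∀ t, 0 < Df t := by
      intro t
      by_cases ht : t ∈ B
      · have := hfs ht
        rw [mem_iUnion₂] at this
        obtain ⟨i, hi, hti⟩ := this
        have hsum : 0 < ∑ i ∈ fs, gf i t :=
          Finset.sum_pos' (fun j _ => hgfnonneg j t) ⟨i, hi, hgfpos i t hti⟩
        have := infDist_nonneg (s := B) (x := t)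
        simp only [hDf]; linarith
      · have h1 : 0 < infDist t B := (hBclosed.notMem_iff_infDist_pos hBne).mp ht
        have h2 : 0 ≤ ∑ i ∈ fs, gf i t := Finset.sum_nonneg fun j _ => hgfnonneg j t
        simp only [hDf]; linarith
    have hsumDf : ∀ t, ∑ i ∈ fs, gf i t ≤ Df t := by
      intro t
      simp only [hDf]
      have := infDist_nonneg (s := B) (x := t)
      linarith
    set vf : Icc (0:ℝ) 1 → V := fun t => (Df t)⁻¹ • ∑ i ∈ fs, gf i t • dir i.1 i.2 with hvf
    have hvfcont : Continuous vf :=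
      (hDfcont.inv₀ fun t => (hDfpos t).ne').smul
        (continuous_finset_sum fs fun i _ => (hgfcont i).smul continuous_const)
    have hvfnorm : ∀ t, ‖vf t‖ ≤ 1 := by
      intro t
      have h1 : ‖∑ i ∈ fs, gf i t • dir i.1 i.2‖ ≤ ∑ i ∈ fs, gf i t := by
        refine (norm_sum_le _ _).trans (Finset.sum_le_sum fun i _ => ?_)
        rw [norm_smul, Real.norm_eq_abs, abs_of_nonneg (hgfnonneg i t)]
        calc gf i t * ‖dir i.1 i.2‖ ≤ gf i t * 1 :=
              mul_le_mul_of_nonneg_left (hdir1 i.1 i.2) (hgfnonneg i t)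
          _ = gf i t := mul_one _
      simp only [hvf]
      rw [norm_smul, Real.norm_eq_abs, abs_of_nonneg (inv_nonneg.mpr (hDfpos t).le)]
      have h2 : ‖∑ i ∈ fs, gf i t • dir i.1 i.2‖ ≤ Df t := h1.trans (hsumDf t)
      calc (Df t)⁻¹ * ‖∑ i ∈ fs, gf i t • dir i.1 i.2‖ ≤ (Df t)⁻¹ * Df t :=
            mul_le_mul_of_nonneg_left h2 (inv_nonneg.mpr (hDfpos t).le)
        _ = 1 := inv_mul_cancel₀ (hDfpos t).ne'
    have hvfB : ∀ t ∈ B, ε/2 ≤ L t (vf t) := by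
      intro t ht
      have hD0 : infDist t B = 0 := infDist_zero_of_mem ht
      have hDt : Df t = ∑ i ∈ fs, gf i t := by simp only [hDf, hD0, add_zero]
      have hterm : ∀ i ∈ fs, gf i t * (ε/2) ≤ gf i t * L t (dir i.1 i.2) := by
        intro i _
        rcases lt_or_eq_of_le (hgfnonneg i t) with hpos | heq
        · apply mul_le_mul_of_nonneg_left _ (hgfnonneg i t)
          have : 0 < L t (dir i.1 i.2) - ε/2 := by
            by_contra hcc
            push_neg at hcc
            simp only [hgf, max_eq_left hcc] at hpos
            exact lt_irrefl _ hpos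
          linarith
        · rw [← heq, zero_mul, zero_mul]
      have hsum : (∑ i ∈ fs, gf i t) * (ε/2) ≤ L t (∑ i ∈ fs, gf i t • dir i.1 i.2) := by
        rw [map_sum]
        calc (∑ i ∈ fs, gf i t) * (ε/2) = ∑ i ∈ fs, gf i t * (ε/2) := by
              rw [Finset.sum_mul]
          _ ≤ ∑ i ∈ fs, gf i t * L t (dir i.1 i.2) := Finset.sum_le_sum hterm
          _ = ∑ i ∈ fs, L t (gf i t • dir i.1 i.2) := by
              refine Finset.sum_congr rfl fun i _ => ?_
              rw [map_smul]; simp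
      have hLv : L t (vf t) = (Df t)⁻¹ * L t (∑ i ∈ fs, gf i t • dir i.1 i.2) := by
        simp only [hvf, map_smul]; simp
      rw [hLv]
      rw [← hDt] at hsum
      have h2 : (Df t)⁻¹ * (Df t * (ε/2)) ≤ (Df t)⁻¹ * L t (∑ i ∈ fs, gf i t • dir i.1 i.2) :=
        mul_le_mul_of_nonneg_left hsum (inv_nonneg.mpr (hDfpos t).le)
      rwa [← mul_assoc, inv_mul_cancel₀ (hDfpos t).ne', one_mul] at h2
    -- cutoff function
    set χ : Icc (0:ℝ) 1 → ℝ := fun t => min 1 (max 0 ((4/ε) * (Ψ (σ t) - (c - 3*ε/4)))) with hχ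
    have hχcont : Continuous χ :=
      continuous_const.min (continuous_const.max
        (continuous_const.mul ((hΨc.comp σ.continuous).sub continuous_const)))
    have hχ01 : ∀ t, 0 ≤ χ t ∧ χ t ≤ 1 := fun t =>
      ⟨le_min zero_le_one (le_max_left _ _), min_le_left _ _⟩
    have hχB : ∀ t, χ t ≠ 0 → t ∈ B := by
      intro t ht
      by_contra htB
      simp only [hB, mem_setOf_eq, not_le] at htB
      apply ht
      simp only [hχ]
      have : (4/ε) * (Ψ (σ t) - (c - 3*ε/4)) ≤ 0 := by
        apply mul_nonpos_of_nonneg_of_nonpos (by positivity) (by linarith)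
      rw [max_eq_left this, min_eq_right zero_le_one]
    have hχ1 : ∀ t, c - ε/2 ≤ Ψ (σ t) → χ t = 1 := by
      intro t ht
      have : (1:ℝ) ≤ (4/ε) * (Ψ (σ t) - (c - 3*ε/4)) := by
        have hX : ε/4 ≤ Ψ (σ t) - (c - 3*ε/4) := by linarith
        calc (1:ℝ) = (4/ε) * (ε/4) := by field_simp
          _ ≤ (4/ε) * (Ψ (σ t) - (c - 3*ε/4)) :=
              mul_le_mul_of_nonneg_left hX (by positivity)
      simp only [hχ]
      rw [max_eq_right (le_trans zero_le_one this), min_eq_left this]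
    -- homotopy image and derivative bound
    set Hmap : Icc (0:ℝ) 1 × ℝ → V := fun p => σ p.1 - p.2 • (χ p.1 • vf p.1) with hHmap
    have hHcont : Continuous Hmap := by
      apply Continuous.sub (σ.continuous.comp continuous_fst)
      exact continuous_snd.smul ((hχcont.comp continuous_fst).smul (hvfcont.comp continuous_fst))
    set K : Set V := Hmap '' ((univ : Set (Icc (0:ℝ) 1)) ×ˢ Icc (0:ℝ) 1) with hK
    have hKcpt : IsCompact K := (isCompact_univ.prod isCompact_Icc).image hHcont
    obtain ⟨Lb, hLb⟩ := hKcpt.exists_bound_of_continuousOn (hΨ'c.continuousOn)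
    set Lb' : ℝ := max Lb 0 + 1 with hLb'
    have hLb'pos : 0 < Lb' := by positivity
    have hLbK : ∀ x ∈ K, ‖fderiv ℝ Ψ x‖ ≤ Lb' := fun x hx =>
      (hLb x hx).trans (by simp only [hLb']; have := le_max_left Lb 0; linarith)
    -- uniform closeness of derivative along homotopy (tube lemma)
    set G : Icc (0:ℝ) 1 × ℝ → ℝ := fun p => ‖fderiv ℝ Ψ (Hmap p) - fderiv ℝ Ψ (σ p.1)‖ with hG
    have hGcont : Continuous G :=
      ((hΨ'c.comp hHcont).sub (hΨ'c.comp (σ.continuous.comp continuous_fst))).norm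
    have hN0 : (univ : Set (Icc (0:ℝ) 1)) ×ˢ ({0} : Set ℝ) ⊆ {p | G p < ε/4} := by
      rintro ⟨t, θ⟩ ⟨-, hθ⟩
      simp only [mem_singleton_iff] at hθ
      subst hθ
      simp only [hG, hHmap, mem_setOf_eq, zero_smul, sub_zero, sub_self, norm_zero]
      positivity
    obtain ⟨u1, v1, hu1o, hv1o, hu1s, hv1s, huv1⟩ :=
      generalized_tube_lemma isCompact_univ isCompact_singleton
        (isOpen_lt hGcont continuous_const) hN0
    obtain ⟨r, hr, hball⟩ := Metric.isOpen_iff.mp hv1o 0 (hv1s rfl)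
    -- choice of step size
    set sδ : ℝ := min (min 1 (r/2)) (ε/(4*Lb')) with hsδ
    have hsδpos : 0 < sδ := by
      apply lt_min (lt_min one_pos (by positivity)) (by positivity)
    have hsδ1 : sδ ≤ 1 := le_trans (min_le_left _ _) (min_le_left _ _)
    have hsδr : sδ ≤ r/2 := le_trans (min_le_left _ _) (min_le_right _ _)
    have hsδL : sδ ≤ ε/(4*Lb') := min_le_right _ _
    have hGsmall : ∀ (t : Icc (0:ℝ) 1) (θ : ℝ), 0 ≤ θ → θ ≤ sδ → G (t, θ) < ε/4 := by
      intro t θ h0 h1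
      apply huv1
      constructor
      · exact hu1s (mem_univ t)
      · apply hball
        rw [mem_ball, Real.dist_eq, sub_zero, abs_of_nonneg h0]
        linarith
    -- the deformed path
    have hτcont : Continuous (fun t : Icc (0:ℝ) 1 => σ t - sδ • (χ t • vf t)) :=
      σ.continuous.sub (continuous_const.smul (hχcont.smul hvfcont))
    set τ : C(Icc (0:ℝ) 1, V) := ⟨fun t => σ t - sδ • (χ t • vf t), hτcont⟩ with hτ
    have hχz₀ : χ z₀ = 0 := by
      by_contra hne0
      have := hχB z₀ hne0
      simp only [hB, mem_setOf_eq] at this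
      rw [show σ z₀ = 0 from g.2.1, hΨ0] at this
      linarith
    have hχz₁ : χ z₁ = 0 := by
      by_contra hne0
      have := hχB z₁ hne0
      simp only [hB, mem_setOf_eq] at this
      rw [show σ z₁ = e from g.2.2] at this
      linarith
    have hτXs : τ ∈ Xs := by
      constructor
      · show σ z₀ - sδ • (χ z₀ • vf z₀) = 0
        rw [hχz₀, zero_smul, smul_zero, sub_zero, g.2.1]
      · show σ z₁ - sδ • (χ z₁ • vf z₁) = e
        rw [hχz₁, zero_smul, smul_zero, sub_zero, g.2.2]
    set τX : Xs := ⟨τ, hτXs⟩ with hτX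
    -- distance bound
    have hdistbound : dist g τX ≤ sδ := by
      rw [Subtype.dist_eq]
      rw [ContinuousMap.dist_le hsδpos.le]
      intro t
      show dist (σ t) (σ t - sδ • (χ t • vf t)) ≤ sδ
      rw [dist_eq_norm]
      simp only [sub_sub_cancel]
      rw [norm_smul, norm_smul, Real.norm_eq_abs, Real.norm_eq_abs,
        abs_of_nonneg hsδpos.le, abs_of_nonneg (hχ01 t).1]
      calc sδ * (χ t * ‖vf t‖) ≤ sδ * (1 * 1) := by
            apply mul_le_mul_of_nonneg_left _ hsδpos.le
            exact mul_le_mul (hχ01 t).2 (hvfnorm t) (norm_nonneg _) zero_le_one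
        _ = sδ := by ring
    -- pointwise decrease
    have hdec : ∀ t : Icc (0:ℝ) 1, Ψ (τ t) ≤ F g - sδ * (ε/4) := by
      intro t
      have hΨd : Differentiable ℝ Ψ := hΨC1.differentiable one_ne_zero
      set w0 : V := χ t • vf t with hw0
      set φ : ℝ → ℝ := fun θ => Ψ (σ t - θ • w0) with hφ
      set φ' : ℝ → ℝ := fun θ => -(fderiv ℝ Ψ (σ t - θ • w0) w0) with hφ'
      have hφderiv : ∀ θ : ℝ, HasDerivAt φ (φ' θ) θ := by
        intro θ
        have hid : HasDerivAt (fun θ : ℝ => θ • w0) ((1:ℝ) • w0) θ :=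
          (hasDerivAt_id θ).smul_const w0
        rw [one_smul] at hid
        have hinner : HasDerivAt (fun θ : ℝ => σ t - θ • w0) (-w0) θ :=
          hid.const_sub (σ t)
        have hcomp := ((hΨd _).hasFDerivAt).comp_hasDerivAt θ hinner
        have : (fderiv ℝ Ψ (σ t - θ • w0)) (-w0) = φ' θ := by
          rw [map_neg]
        rw [← this]
        exact hcomp
      have hφcont : ContinuousOn φ (Icc 0 sδ) :=
        (hΨc.comp (continuous_const.sub (continuous_id.smul continuous_const))).continuousOn
      obtain ⟨θs, hθs, hslope⟩ := exists_hasDerivAt_eq_slope φ φ' hsδpos hφcont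
        (fun x _ => hφderiv x)
      rw [sub_zero, eq_div_iff hsδpos.ne'] at hslope
      set u2 : V := σ t - θs • w0 with hu2
      set D2 : ℝ := fderiv ℝ Ψ u2 w0 with hD2
      have hslope' : φ sδ = φ 0 - sδ * D2 := by
        have h0 : φ' θs = -D2 := rfl
        rw [h0] at hslope
        linarith [mul_comm (-D2) sδ, hslope]
      have hval : Ψ (τ t) = φ sδ := rfl
      have hφ0 : φ 0 = Ψ (σ t) := by
        show Ψ (σ t - (0:ℝ) • w0) = Ψ (σ t)
        rw [zero_smul, sub_zero]
      -- the evaluated point lies on the homotopy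
      have hpt : u2 = Hmap (t, θs) := rfl
      have hθsmem : θs ∈ Icc (0:ℝ) 1 := ⟨hθs.1.le, hθs.2.le.trans hsδ1⟩
      have hptK : u2 ∈ K := by
        rw [hpt]
        exact ⟨(t, θs), ⟨mem_univ t, hθsmem⟩, rfl⟩
      rw [hval, hslope', hφ0]
      by_cases hcase : c - ε/2 ≤ Ψ (σ t)
      · -- high region: genuine decrease
        have hχt : χ t = 1 := hχ1 t hcase
        have htB : t ∈ B := by
          simp only [hB, mem_setOf_eq]; linarith
        have hLtv : ε/2 ≤ L t (vf t) := hvfB t htB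
        have hclose : ‖fderiv ℝ Ψ u2 - L t‖ < ε/4 := by
          have := hGsmall t θs hθs.1.le hθs.2.le
          simp only [hG] at this
          rw [hpt]
          exact this
        have happly : |fderiv ℝ Ψ u2 (vf t) - L t (vf t)| ≤ ε/4 := by
          have h1 : ‖(fderiv ℝ Ψ u2 - L t) (vf t)‖ ≤ ‖fderiv ℝ Ψ u2 - L t‖ * ‖vf t‖ :=
            ContinuousLinearMap.le_opNorm _ _
          rw [ContinuousLinearMap.sub_apply, Real.norm_eq_abs] at h1
          refine h1.trans ?_
          calc ‖fderiv ℝ Ψ u2 - L t‖ * ‖vf t‖ ≤ (ε/4) * 1 := by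
                apply mul_le_mul hclose.le (hvfnorm t) (norm_nonneg _) (by positivity)
            _ = ε/4 := mul_one _
        have hd4 : ε/4 ≤ fderiv ℝ Ψ u2 (vf t) := by
          have := (abs_le.mp happly).1
          linarith
        have hev : D2 = χ t * fderiv ℝ Ψ u2 (vf t) := by
          rw [hD2, hw0, map_smul, smul_eq_mul]
        rw [hev, hχt, one_mul]
        have hFgt : Ψ (σ t) ≤ F g := hFge g t
        nlinarith [hsδpos]
      · -- low region: small increase
        push_neg at hcase
        have hbnd : |D2| ≤ Lb' := by
          have h1 : ‖fderiv ℝ Ψ u2‖ ≤ Lb' := hLbK _ hptK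
          have h2 : ‖w0‖ ≤ 1 := by
            rw [hw0, norm_smul, Real.norm_eq_abs, abs_of_nonneg (hχ01 t).1]
            calc χ t * ‖vf t‖ ≤ 1 * 1 :=
                mul_le_mul (hχ01 t).2 (hvfnorm t) (norm_nonneg _) zero_le_one
              _ = 1 := one_mul _
          rw [← Real.norm_eq_abs]
          calc ‖fderiv ℝ Ψ u2 w0‖ ≤ ‖fderiv ℝ Ψ u2‖ * ‖w0‖ :=
                ContinuousLinearMap.le_opNorm _ _
            _ ≤ Lb' * 1 := mul_le_mul h1 h2 (norm_nonneg _) hLb'pos.le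
            _ = Lb' := mul_one _
        have h3 : sδ * Lb' ≤ ε/4 := by
          rw [← le_div_iff₀ hLb'pos]
          refine hsδL.trans (le_of_eq (div_div ε 4 Lb').symm)
        have h4 := abs_le.mp hbnd
        have h5 : c - ε/4 ≤ F g := by linarith
        have h6 : sδ * (ε/4) ≤ 1 * (ε/4) :=
          mul_le_mul_of_nonneg_right hsδ1 (by positivity)
        nlinarith [hsδpos, mul_le_mul_of_nonneg_left h4.1 hsδpos.le,
          mul_le_mul_of_nonneg_left h4.2 hsδpos.le]
    -- conclude
    have hFτ : F τX ≤ F g - sδ * (ε/4) := by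
      refine csSup_le ⟨Ψ (τ z₀), z₀, rfl⟩ ?_
      rintro y ⟨t, rfl⟩
      exact hdec t
    have hek := hgek τX
    obtain ⟨d, hd1, hd2⟩ : ∃ d, dist g τX = d ∧ d ≤ sδ := ⟨_, rfl, hdistbound⟩
    obtain ⟨Fτ, hq1⟩ : ∃ q, F τX = q := ⟨_, rfl⟩
    obtain ⟨Fg, hq2⟩ : ∃ q, F g = q := ⟨_, rfl⟩
    rw [hd1, hq1, hq2] at hek
    rw [hq1, hq2] at hFτ
    have hd0 : 0 ≤ d := hd1 ▸ dist_nonneg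
    have hek2 : Fg - ε/8 * d ≤ Fτ := hek
    have hfτ2 : Fτ ≤ Fg - sδ * (ε/4) := hFτ
    have h8 : ε/8 * d ≤ ε/8 * sδ := mul_le_mul_of_nonneg_left hd2 (by positivity)
    clear_value sδ
    have hpos : 0 < sδ * ε := mul_pos hsδpos hε
    have e1 : sδ * (ε/4) = (sδ*ε)/4 := by ring
    have e2 : ε/8 * sδ = (sδ*ε)/8 := by ring
    linarith only [hek2, hfτ2, h8, hpos, e1, e2]
  -- build the Palais-Smale sequence
  have hεk : ∀ k : ℕ, ∃ u : V, |Ψ u - c| ≤ min (ρ/2) (1/(k+1)) ∧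
      ‖fderiv ℝ Ψ u‖ ≤ min (ρ/2) (1/(k+1)) := by
    intro k
    refine main _ (lt_min (by positivity) (by positivity)) (min_le_left _ _)
  choose w hw1 hw2 using hεk
  have hε0 : Tendsto (fun k : ℕ => min (ρ/2) (1/(k+1) : ℝ)) atTop (𝓝 0) := by
    have h1 : Tendsto (fun k : ℕ => (1/(k+1) : ℝ)) atTop (𝓝 0) := by
      exact tendsto_one_div_add_atTop_nhds_zero_nat
    have := h1.const_mul (0:ℝ)
    refine squeeze_zero (fun k => le_min (by positivity) (by positivity)) (fun k => min_le_right _ _) h1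
  refine ⟨w, ?_, ?_⟩
  · have h1 : Tendsto (fun k => |Ψ (w k) - c|) atTop (𝓝 0) :=
      squeeze_zero (fun k => abs_nonneg _) hw1 hε0
    have h2 : Tendsto (fun k => Ψ (w k) - c) atTop (𝓝 0) := by
      rwa [tendsto_zero_iff_abs_tendsto_zero]
    have := h2.add (tendsto_const_nhds (x := c))
    simpa using this
  · exact squeeze_zero (fun k => norm_nonneg _) hw2 hε0
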